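/- Let E be a finite-dimensional real normed space and K ⊆ E a nonempty bounded set with diam K > 0. Then the ball intersection of K equals the union of all completions of K: bi(K) = ⋃ {K^c : K^c is a completion of K}. -/

import Mathlib

open Metric Set

variable {E : Type*} [NormedAddCommGroup E] [NormedSpace ℝ E] [FiniteDimensional ℝ E]

/-- The Chebyshev radius of a set: the smallest `r` such that `K` is contained
in a closed ball of radius `r`. -/
noncomputable def chebRadius (K : Set E) : ℝ :=
  sInf {r : ℝ | ∃ x : E, K ⊆ Metric.closedBall x r}

/-- The `r`-ball intersection of `K`. -/
def ballInt (K : Set E) (r : ℝ) : Set E :=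
  ⋂ x ∈ K, Metric.closedBall x r

/-- The `r`-ball hull of `K`. -/
def ballHull (K : Set E) (r : ℝ) : Set E :=
  ⋂ x ∈ {x : E | K ⊆ Metric.closedBall x r}, Metric.closedBall x r

/-- The Chebyshev set of `K`: centers of minimal enclosing balls of `K`. -/
noncomputable def chebSet (K : Set E) : Set E :=
  {x : E | K ⊆ Metric.closedBall x (chebRadius K)}

/-- A bounded set is (diametrically) complete if adding any new point
increases its diameter. -/
def IsDiamComplete (C : Set E) : Prop :=
  Bornology.IsBounded C ∧ ∀ x ∉ C, Metric.diam C < Metric.diam (C ∪ {x})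

/-- `Kc` is a completion of `K`: a complete set containing `K` with the same diameter. -/
def IsCompletion (Kc K : Set E) : Prop :=
  IsDiamComplete Kc ∧ K ⊆ Kc ∧ Metric.diam Kc = Metric.diam K

/-- The critical set of `K` with respect to a Chebyshev center `x`. -/
noncomputable def critSet (K : Set E) (x : E) : Set E :=
  K ∩ Metric.sphere x (chebRadius K)

lemma exists_isDiamComplete_superset {A : Set E} (hA : Bornology.IsBounded A) :
    ∃ M, A ⊆ M ∧ IsDiamComplete M ∧ EMetric.diam M = EMetric.diam A := by
  set d := EMetric.diam A with hdA
  have hdtop : d ≠ ⊤ := hA.ediam_ne_top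
  set S : Set (Set E) := {M | A ⊆ M ∧ EMetric.diam M ≤ d} with hS
  have hzorn : ∀ c ⊆ S, IsChain (· ⊆ ·) c → c.Nonempty → ∃ ub ∈ S, ∀ s ∈ c, s ⊆ ub := by
    intro c hcS hchain hcne
    refine ⟨⋃₀ c, ⟨?_, ?_⟩, fun s hs => subset_sUnion_of_mem hs⟩
    · obtain ⟨t, ht⟩ := hcne
      exact (hcS ht).1.trans (subset_sUnion_of_mem ht)
    · apply EMetric.diam_le
      rintro x ⟨s, hs, hxs⟩ y ⟨t, ht, hyt⟩
      rcases hchain.total hs ht with h | h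
      · exact le_trans (EMetric.edist_le_diam_of_mem (h hxs) hyt) (hcS ht).2
      · exact le_trans (EMetric.edist_le_diam_of_mem hxs (h hyt)) (hcS hs).2
  obtain ⟨M, hAM, hMmax⟩ := zorn_subset_nonempty S hzorn A ⟨Subset.rfl, le_rfl⟩
  have hMS : M ∈ S := hMmax.prop
  have hmax : ∀ N ∈ S, M ⊆ N → N = M := fun N hN hMN => subset_antisymm (hMmax.2 hN hMN) hMN
  have hMd : EMetric.diam M = d := le_antisymm hMS.2 (EMetric.diam_mono hAM)
  have hMb : Bornology.IsBounded M :=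
    Metric.isBounded_iff_ediam_ne_top.mpr (fun h => hdtop (hMd.symm.trans h))
  refine ⟨M, hAM, ⟨hMb, ?_⟩, hMd⟩
  intro z hz
  by_contra hle
  push_neg at hle
  have hub : Bornology.IsBounded (M ∪ {z}) := hMb.union (Bornology.isBounded_singleton)
  have hetop : EMetric.diam (M ∪ {z}) ≠ ⊤ := hub.ediam_ne_top
  have : EMetric.diam (M ∪ {z}) ≤ EMetric.diam M := by
    rw [Metric.diam, Metric.diam] at hle
    exact (ENNReal.toReal_le_toReal hetop (hMd ▸ hdtop)).mp hle
  have hNS : M ∪ {z} ∈ S := ⟨hAM.trans subset_union_left, this.trans hMS.2⟩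
  have := hmax _ hNS subset_union_left
  exact hz (this ▸ mem_union_right M rfl : z ∈ M)

theorem ballInt_eq_sUnion_completions (K : Set E)
    (hK : K.Nonempty) (hb : Bornology.IsBounded K) (hd : 0 < Metric.diam K) :
    ballInt K (Metric.diam K) = ⋃₀ {Kc : Set E | IsCompletion Kc K} := by
  ext x
  simp only [ballInt, mem_iInter, Metric.mem_closedBall, mem_sUnion, mem_setOf_eq]
  constructor
  · intro hx
    have hKtop : EMetric.diam K ≠ ⊤ := hb.ediam_ne_top
    have hdi : EMetric.diam (K ∪ {x}) = EMetric.diam K := by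
      refine le_antisymm (EMetric.diam_le ?_) (EMetric.diam_mono subset_union_left)
      have key : ∀ a ∈ K, edist x a ≤ EMetric.diam K := by
        intro a ha
        rw [edist_dist, ← ENNReal.ofReal_toReal hKtop]
        exact ENNReal.ofReal_le_ofReal ((dist_comm x a ▸ hx a ha))
      rintro a (ha | rfl) b (hb' | rfl)
      · exact EMetric.edist_le_diam_of_mem ha hb'
      · rw [edist_comm]; exact key a ha
      · exact key b hb'
      · simp
    obtain ⟨M, hAM, hMc, hMd⟩ :=
      exists_isDiamComplete_superset (hb.union Bornology.isBounded_singleton)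
    have hMdK : EMetric.diam M = EMetric.diam K := hMd.trans hdi
    refine ⟨M, ⟨hMc, subset_union_left.trans hAM, ?_⟩, hAM (mem_union_right _ rfl)⟩
    rw [Metric.diam, Metric.diam]; exact congrArg ENNReal.toReal hMdK
  · rintro ⟨Kc, ⟨⟨hbKc, _⟩, hKKc, hdiam⟩, hxKc⟩ y hy
    calc dist x y ≤ Metric.diam Kc := Metric.dist_le_diam_of_mem hbKc hxKc (hKKc hy)
    _ = Metric.diam K := hdiam
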